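/- arXiv:2301.11718 — 2 statements merged into one kernel-verified Lean document; each statement's English description precedes it below -/
import Mathlib

section
/- Let u_1,...,u_N be real numbers with sum zero and (1/N)∑ u_k² = t. If (w_1,w_2,w_3) is obtained by sampling without replacement, then E[w_1² w_2 w_3] = (2/((N-1)(N-2)))·(1/N)∑_{k=1}^N u_k⁴ − (N/((N-1)(N-2)))·t². -/
open Finset

/-- Let `u_1,...,u_N` (`N ≥ 3`) be real numbers with sum zero and
`(1/N) ∑ u_k² = t`. If `(w_1,w_2,w_3)` is obtained by sampling without replacement
(each ordered triple of distinct indices equally likely, probability `1/(N(N-1)(N-2))`),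
then `E[w_1² w_2 w_3] = (2/((N-1)(N-2)))·(1/N)∑ u_k⁴ − (N/((N-1)(N-2)))·t²`. -/
theorem sampling_without_replacement_fourth_mixed
    (N : ℕ) (hN : 3 ≤ N) (u : Fin N → ℝ) (t : ℝ)
    (hsum : ∑ k, u k = 0) (hvar : (∑ k, u k ^ 2) / N = t) :
    (∑ s : Fin N, ∑ r ∈ univ.erase s, ∑ l ∈ (univ.erase s).erase r,
        u s ^ 2 * u r * u l) / ((N : ℝ) * ((N : ℝ) - 1) * ((N : ℝ) - 2))
      = (2 / (((N : ℝ) - 1) * ((N : ℝ) - 2))) * ((∑ k, u k ^ 4) / N)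
        - ((N : ℝ) / (((N : ℝ) - 1) * ((N : ℝ) - 2))) * t ^ 2 := by
  have hNR : (3 : ℝ) ≤ (N : ℝ) := by exact_mod_cast hN
  have h0 : (N : ℝ) ≠ 0 := by linarith
  have h1 : (N : ℝ) - 1 ≠ 0 := by linarith
  have h2 : (N : ℝ) - 2 ≠ 0 := by linarith
  set S2 := ∑ k, u k ^ 2 with hS2
  have key : (∑ s : Fin N, ∑ r ∈ univ.erase s, ∑ l ∈ (univ.erase s).erase r,
      u s ^ 2 * u r * u l) = 2 * (∑ k, u k ^ 4) - S2 ^ 2 := by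
    have hinner : ∀ s : Fin N, (∑ r ∈ univ.erase s, ∑ l ∈ (univ.erase s).erase r,
        u s ^ 2 * u r * u l) = 2 * u s ^ 4 - u s ^ 2 * S2 := by
      intro s
      have hs : ∑ r ∈ univ.erase s, u r = - u s := by
        have := Finset.sum_erase_eq_sub (f := u) (mem_univ s)
        rw [this, hsum]; ring
      have hs2 : ∑ r ∈ univ.erase s, u r ^ 2 = S2 - u s ^ 2 := by
        have := Finset.sum_erase_eq_sub (f := fun k => u k ^ 2) (mem_univ s)
        rw [this]
      have step : ∀ r ∈ univ.erase s, (∑ l ∈ (univ.erase s).erase r,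
          u s ^ 2 * u r * u l) = u s ^ 2 * u r * (- u s - u r) := by
        intro r hr
        rw [← Finset.mul_sum, Finset.sum_erase_eq_sub hr, hs]
      rw [Finset.sum_congr rfl step]
      have : ∑ r ∈ univ.erase s, u s ^ 2 * u r * (- u s - u r)
          = (- u s ^ 3) * (∑ r ∈ univ.erase s, u r)
            - u s ^ 2 * (∑ r ∈ univ.erase s, u r ^ 2) := by
        rw [Finset.mul_sum, Finset.mul_sum, ← Finset.sum_sub_distrib]
        exact Finset.sum_congr rfl fun r _ => by ring
      rw [this, hs, hs2]; ring
    rw [Finset.sum_congr rfl fun s _ => hinner s, Finset.sum_sub_distrib,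
      ← Finset.mul_sum, ← Finset.sum_mul]
    ring
  rw [key, ← hvar]
  field_simp
end

section
/- Let A_1,...,A_n be complex numbers and let (x_1,...,x_n) be a uniformly random permutation of deterministic values v_1,...,v_n summing to zero. Define the martingale differences M_l = ∑_{j=1}^n A_j (E[x_j|F_l] − E[x_j|F_{l−1}]). Then M_l = (A_l − (1/(n−l))∑_{j=l+1}^n A_j)·(x_l + (1/(n−l+1))∑_{k=1}^{l−1} x_k) for 1 ≤ l ≤ n−1. -/
open MeasureTheory Finset

noncomputable section

/-- The symmetric group `S_n` carries the discrete σ-algebra. -/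
instance permMeasurableSpace (n : ℕ) : MeasurableSpace (Equiv.Perm (Fin n)) := ⊤

/-- The uniform probability measure on the permutations of `{1,...,n}`. -/
def permMeasure (n : ℕ) : Measure (Equiv.Perm (Fin n)) :=
  (PMF.uniformOfFintype (Equiv.Perm (Fin n))).toMeasure

instance (n : ℕ) : IsProbabilityMeasure (permMeasure n) :=
  PMF.toMeasure.isProbabilityMeasure _

/-- `F_l`, the σ-field generated by the first `l` samples `x_i = v (σ i)` of a uniformly
random permutation `(x_1,…,x_n) = (v_{σ(1)},…,v_{σ(n)})` of the values `v_1,…,v_n`. -/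
def sampleFiltration (n l : ℕ) (h : l ≤ n) (v : Fin n → ℝ) :
    MeasurableSpace (Equiv.Perm (Fin n)) :=
  MeasurableSpace.comap (fun σ => fun i : Fin l => v (σ (Fin.castLE h i))) inferInstance

lemma measurableSet_perm {n : ℕ} (s : Set (Equiv.Perm (Fin n))) : MeasurableSet s :=
  MeasurableSpace.measurableSet_top

instance (n : ℕ) : MeasurableSingletonClass (Equiv.Perm (Fin n)) :=
  ⟨fun _ => measurableSet_perm _⟩

lemma perm_integral_set (n : ℕ) (s : Set (Equiv.Perm (Fin n))) (f : Equiv.Perm (Fin n) → ℝ) :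
    ∫ x in s, f x ∂(permMeasure n)
      = ((Fintype.card (Equiv.Perm (Fin n)) : ℝ))⁻¹ * ∑ x ∈ Set.Finite.toFinset (Set.toFinite s), f x := by
  classical
  rw [← Set.Finite.coe_toFinset (Set.toFinite s),
    integral_finset _ (Integrable.of_finite.integrableOn)]
  have hx : ∀ x : Equiv.Perm (Fin n),
      ((permMeasure n) {x}).toReal = ((Fintype.card (Equiv.Perm (Fin n)) : ℝ))⁻¹ := by
    intro x
    have : (permMeasure n) {x} = (PMF.uniformOfFintype (Equiv.Perm (Fin n))) x := by
      rw [permMeasure, PMF.toMeasure_apply_singleton _ _ (measurableSet_perm _)]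
    rw [this, PMF.uniformOfFintype_apply]
    simp [ENNReal.toReal_inv]
  simp only [smul_eq_mul, measureReal_def, hx]
  rw [← Finset.mul_sum]
  congr 1
  apply Finset.sum_congr _ (fun _ _ => rfl)
  ext x; simp

lemma sum_filter_lt {n l : ℕ} (h : l ≤ n) (w : Fin n → ℝ) :
    ∑ k ∈ univ.filter (fun k : Fin n => (k : ℕ) < l), w k
      = ∑ i : Fin l, w (Fin.castLE h i) := by
  refine Finset.sum_bij' (fun k hk => (⟨(k : ℕ), (Finset.mem_filter.mp hk).2⟩ : Fin l))
    (fun i _ => Fin.castLE h i) ?_ ?_ ?_ ?_ ?_ <;>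
    simp [Fin.ext_iff, Fin.lt_iff_val_lt_val]

lemma saturated_of_measurableSet {n l : ℕ} (h : l ≤ n) (v : Fin n → ℝ)
    {s : Set (Equiv.Perm (Fin n))} (hs : MeasurableSet[sampleFiltration n l h v] s)
    {σ τ : Equiv.Perm (Fin n)} (hσ : σ ∈ s)
    (hvt : ∀ i : Fin l, v (τ (Fin.castLE h i)) = v (σ (Fin.castLE h i))) : τ ∈ s := by
  obtain ⟨t, -, rfl⟩ := hs
  have : (fun i : Fin l => v (τ (Fin.castLE h i))) = fun i => v (σ (Fin.castLE h i)) :=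
    funext hvt
  simpa [Set.mem_preimage, this] using hσ

lemma swap_sum_eq {n l : ℕ} (h : l ≤ n) (v : Fin n → ℝ)
    {s : Set (Equiv.Perm (Fin n))} (hs : MeasurableSet[sampleFiltration n l h v] s)
    {j j' : Fin n} (hj : l ≤ (j : ℕ)) (hj' : l ≤ (j' : ℕ)) :
    ∑ τ ∈ Set.Finite.toFinset (Set.toFinite s), v (τ j)
      = ∑ τ ∈ Set.Finite.toFinset (Set.toFinite s), v (τ j') := by
  classical
  have key : ∀ τ : Equiv.Perm (Fin n), ∀ i : Fin l,
      (τ * Equiv.swap j j') (Fin.castLE h i) = τ (Fin.castLE h i) := by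
    intro τ i
    have h1 : Fin.castLE h i ≠ j := by
      intro hh
      have h2 : ((Fin.castLE h i : Fin n) : ℕ) = (j : ℕ) := by rw [hh]
      simp only [Fin.coe_castLE] at h2
      have := i.2; omega
    have h2 : Fin.castLE h i ≠ j' := by
      intro hh
      have h2 : ((Fin.castLE h i : Fin n) : ℕ) = (j' : ℕ) := by rw [hh]
      simp only [Fin.coe_castLE] at h2
      have := i.2; omega
    simp [Equiv.Perm.mul_apply, Equiv.swap_apply_of_ne_of_ne h1 h2]
  refine Finset.sum_bij' (fun τ _ => τ * Equiv.swap j j')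
    (fun τ _ => τ * Equiv.swap j j') ?_ ?_ ?_ ?_ ?_
  · intro τ hτ
    simp only [Set.Finite.mem_toFinset] at hτ ⊢
    exact saturated_of_measurableSet h v hs hτ (fun i => by rw [key])
  · intro τ hτ
    simp only [Set.Finite.mem_toFinset] at hτ ⊢
    exact saturated_of_measurableSet h v hs hτ (fun i => by rw [key])
  · intro τ _; simp [mul_assoc]
  · intro τ _; simp [mul_assoc]
  · intro τ _; simp [Equiv.Perm.mul_apply]

lemma card_filter_le {n l : ℕ} (h : l ≤ n) :
    (univ.filter (fun j : Fin n => l ≤ (j : ℕ))).card = n - l := by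
  have h1 : (univ.filter (fun j : Fin n => (j : ℕ) < l)).card = l := by
    have := sum_filter_lt h (fun _ => (1 : ℝ))
    simpa using this
  have h2 := Finset.card_filter_add_card_filter_not
    (s := (univ : Finset (Fin n))) (p := fun j : Fin n => (j : ℕ) < l)
  have h3 : (univ.filter (fun j : Fin n => ¬ (j : ℕ) < l))
      = univ.filter (fun j : Fin n => l ≤ (j : ℕ)) := by
    apply Finset.filter_congr; intro j _; simp [not_lt]
  simp only [h1, h3, Finset.card_univ, Fintype.card_fin] at h2
  omega

lemma sum_perm_zero {n : ℕ} (v : Fin n → ℝ) (hsum : ∑ j, v j = 0) (τ : Equiv.Perm (Fin n)) :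
    ∑ j, v (τ j) = 0 := by
  rw [Equiv.sum_comp τ v, hsum]

lemma key_sum_eq {n l : ℕ} (hl2 : l < n) (v : Fin n → ℝ) (hsum : ∑ j, v j = 0)
    {s : Set (Equiv.Perm (Fin n))}
    (hs : MeasurableSet[sampleFiltration n l hl2.le v] s)
    {j : Fin n} (hj : l ≤ (j : ℕ)) :
    ∑ τ ∈ Set.Finite.toFinset (Set.toFinite s), v (τ j)
      = ∑ τ ∈ Set.Finite.toFinset (Set.toFinite s),
          (-(((n : ℝ) - l)⁻¹) * ∑ i : Fin l, v (τ (Fin.castLE hl2.le i))) := by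
  classical
  set F := Set.Finite.toFinset (Set.toFinite s)
  have hne : ((n : ℝ) - l) ≠ 0 := by
    have : (l : ℝ) < n := by exact_mod_cast hl2
    linarith
  have h1 : ∑ j' ∈ univ.filter (fun j' : Fin n => l ≤ (j' : ℕ)), ∑ τ ∈ F, v (τ j')
      = ((n : ℝ) - l) * ∑ τ ∈ F, v (τ j) := by
    have hc : ∀ j' ∈ univ.filter (fun j' : Fin n => l ≤ (j' : ℕ)),
        ∑ τ ∈ F, v (τ j') = ∑ τ ∈ F, v (τ j) := fun j' hj' =>
      swap_sum_eq hl2.le v hs (Finset.mem_filter.mp hj').2 hj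
    rw [Finset.sum_congr rfl hc, Finset.sum_const, nsmul_eq_mul, card_filter_le hl2.le]
    congr 1
    push_cast [Nat.cast_sub hl2.le]
    ring
  have h2 : ∑ j' ∈ univ.filter (fun j' : Fin n => l ≤ (j' : ℕ)), ∑ τ ∈ F, v (τ j')
      = ∑ τ ∈ F, (- ∑ i : Fin l, v (τ (Fin.castLE hl2.le i))) := by
    rw [Finset.sum_comm]
    refine Finset.sum_congr rfl fun τ _ => ?_
    have hsplit := Finset.sum_filter_add_sum_filter_not (univ : Finset (Fin n))
      (fun k : Fin n => (k : ℕ) < l) (fun k => v (τ k))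
    have h3 : (univ.filter (fun j' : Fin n => ¬ (j' : ℕ) < l))
        = univ.filter (fun j' : Fin n => l ≤ (j' : ℕ)) := by
      apply Finset.filter_congr; intro k _; simp [not_lt]
    rw [h3, sum_perm_zero v hsum τ, sum_filter_lt hl2.le (fun k => v (τ k))] at hsplit
    linarith
  rw [h2] at h1
  have h4 : ∑ τ ∈ F, (-(((n : ℝ) - l)⁻¹) * ∑ i : Fin l, v (τ (Fin.castLE hl2.le i)))
      = -(((n : ℝ) - l)⁻¹) * ∑ τ ∈ F, ∑ i : Fin l, v (τ (Fin.castLE hl2.le i)) :=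
    Finset.mul_sum _ _ _ |>.symm
  rw [h4]
  rw [Finset.sum_neg_distrib] at h1
  field_simp
  linarith

lemma measurable_sample {n l : ℕ} (h : l ≤ n) (v : Fin n → ℝ) (i : Fin l) :
    Measurable[sampleFiltration n l h v] (fun σ : Equiv.Perm (Fin n) => v (σ (Fin.castLE h i))) := by
  have hπ : Measurable[sampleFiltration n l h v]
      (fun σ : Equiv.Perm (Fin n) => fun i : Fin l => v (σ (Fin.castLE h i))) :=
    Measurable.of_comap_le le_rfl
  exact (measurable_pi_apply i).comp hπ

lemma condexp_known {n l : ℕ} (h : l ≤ n) (v : Fin n → ℝ) {j : Fin n} (hj : (j : ℕ) < l) :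
    (permMeasure n)[(fun τ => v (τ j)) | sampleFiltration n l h v]
      = fun τ => v (τ j) := by
  have hj' : j = Fin.castLE h ⟨(j : ℕ), hj⟩ := by ext; simp
  refine condExp_of_stronglyMeasurable le_top ?_ Integrable.of_finite
  rw [hj']
  exact (measurable_sample h v _).stronglyMeasurable

lemma condexp_unknown {n l : ℕ} (hl2 : l < n) (v : Fin n → ℝ) (hsum : ∑ j, v j = 0)
    {j : Fin n} (hj : l ≤ (j : ℕ)) :
    (permMeasure n)[(fun τ => v (τ j)) | sampleFiltration n l hl2.le v]
      =ᵐ[permMeasure n]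
      fun σ => -(((n : ℝ) - l)⁻¹) * ∑ i : Fin l, v (σ (Fin.castLE hl2.le i)) := by
  refine (ae_eq_condExp_of_forall_setIntegral_eq le_top Integrable.of_finite
    (fun s _ _ => Integrable.of_finite.integrableOn) (fun s hs _ => ?_) ?_).symm
  · rw [perm_integral_set, perm_integral_set]
    congr 1
    exact (key_sum_eq hl2 v hsum hs hj).symm
  · exact StronglyMeasurable.aestronglyMeasurable
      ((((Finset.univ.measurable_sum (fun i _ => measurable_sample hl2.le v i)).const_mul
        _)).stronglyMeasurable)

lemma alg (n l : ℕ) (hl1 : 1 ≤ l) (hl2 : l < n) (Aj B : ℂ) (x S : ℝ) :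
    B * (((-(((n:ℝ) - l)⁻¹) * (x + S) : ℝ) : ℂ) - ((-(((n:ℝ) - (l-1:ℕ))⁻¹) * S : ℝ) : ℂ))
    + Aj * ((x : ℂ) - ((-(((n:ℝ) - (l-1:ℕ))⁻¹) * S : ℝ) : ℂ))
    = (Aj - B / ((n:ℂ) - l)) * ((x:ℂ) + (S:ℂ) / ((n:ℂ) - l + 1)) := by
  have hz1 : ((n : ℂ) - l) ≠ 0 := by
    have h0 : ((n - l : ℕ) : ℂ) ≠ 0 := Nat.cast_ne_zero.mpr (by omega)
    rwa [Nat.cast_sub hl2.le] at h0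
  have hz2 : ((n : ℂ) - l + 1) ≠ 0 := by
    have h0 : ((n - l + 1 : ℕ) : ℂ) ≠ 0 := Nat.cast_ne_zero.mpr (by omega)
    rwa [Nat.cast_add, Nat.cast_sub hl2.le, Nat.cast_one] at h0
  have hcast : ((l - 1 : ℕ) : ℝ) = (l : ℝ) - 1 := by
    rw [Nat.cast_sub hl1, Nat.cast_one]
  have hre : ((n:ℝ) - ((l:ℝ) - 1)) = ((n:ℝ) - l) + 1 := by ring
  have hzr1 : ((n : ℝ) - l) ≠ 0 := by
    have : (l:ℝ) < n := by exact_mod_cast hl2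
    linarith
  have hzr2 : ((n : ℝ) - l + 1) ≠ 0 := by
    have : (l:ℝ) < n := by exact_mod_cast hl2
    linarith
  push_cast [hcast, hre]
  field_simp
  ring

/-- Let `A_1,...,A_n` be complex numbers and `(x_1,...,x_n)` a uniformly
random permutation of deterministic values `v_1,...,v_n` summing to zero, with
`F_l = σ(x_1,...,x_l)`. Define the martingale differences
`M_l = ∑_{j=1}^n A_j (E[x_j|F_l] − E[x_j|F_{l−1}])`. Then for `1 ≤ l ≤ n−1`,
`M_l = (A_l − (1/(n−l)) ∑_{j=l+1}^n A_j) · (x_l + (1/(n−l+1)) ∑_{k=1}^{l−1} x_k)`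
(indices `1`-indexed; a `1`-indexed index `r` corresponds to `⟨r−1, _⟩ : Fin n`). -/
theorem martingale_difference_linear_form
    (n l : ℕ) (hl1 : 1 ≤ l) (hl2 : l < n) (A : Fin n → ℂ)
    (v : Fin n → ℝ) (hsum : ∑ j, v j = 0) :
    (fun σ => ∑ j : Fin n, A j *
        ((((permMeasure n)[(fun τ => v (τ j)) |
            sampleFiltration n l (by omega) v]) σ : ℂ)
          - (((permMeasure n)[(fun τ => v (τ j)) |
            sampleFiltration n (l - 1) (by omega) v]) σ : ℂ)))
      =ᵐ[permMeasure n]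
      fun σ => (A ⟨l - 1, by omega⟩
          - (∑ j ∈ univ.filter (fun j : Fin n => l ≤ (j : ℕ)), A j) / ((n : ℂ) - l))
        * ((v (σ ⟨l - 1, by omega⟩) : ℂ)
          + (∑ k ∈ univ.filter (fun k : Fin n => (k : ℕ) + 1 < l), (v (σ k) : ℂ))
            / ((n : ℂ) - l + 1)) := by
  classical
  have hl1n : l - 1 < n := by omega
  set μ := permMeasure n with hμ
  set jl : Fin n := ⟨l - 1, by omega⟩ with hjl
  -- the a.e. facts
  have hall : ∀ᵐ σ ∂μ, ∀ j : Fin n,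
      (l ≤ (j : ℕ) →
        ((μ[(fun τ => v (τ j)) | sampleFiltration n l hl2.le v]) σ
          = -(((n : ℝ) - l)⁻¹) * ∑ i : Fin l, v (σ (Fin.castLE hl2.le i))))
      ∧ (l - 1 ≤ (j : ℕ) →
        ((μ[(fun τ => v (τ j)) | sampleFiltration n (l - 1) hl1n.le v]) σ
          = -(((n : ℝ) - (l - 1 : ℕ))⁻¹)
              * ∑ i : Fin (l - 1), v (σ (Fin.castLE hl1n.le i)))) := by
    rw [ae_all_iff]
    intro j
    refine Filter.Eventually.and ?_ ?_
    · by_cases hj : l ≤ (j : ℕ)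
      · exact (condexp_unknown hl2 v hsum hj).mono (fun σ hσ _ => hσ)
      · exact Filter.Eventually.of_forall (fun σ h' => absurd h' hj)
    · by_cases hj : l - 1 ≤ (j : ℕ)
      · exact (condexp_unknown hl1n v hsum hj).mono (fun σ hσ _ => hσ)
      · exact Filter.Eventually.of_forall (fun σ h' => absurd h' hj)
  filter_upwards [hall] with σ hσ
  -- set splitting
  have hsplit2 : univ.filter (fun j : Fin n => ¬ l ≤ (j : ℕ))
      = insert jl (univ.filter (fun j : Fin n => (j : ℕ) + 1 < l)) := by
    ext k
    simp only [Finset.mem_filter, Finset.mem_univ, true_and, Finset.mem_insert,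
      Fin.ext_iff, hjl, not_le]
    omega
  have hjlnot : jl ∉ univ.filter (fun j : Fin n => (j : ℕ) + 1 < l) := by
    simp only [Finset.mem_filter, Finset.mem_univ, true_and, hjl]
    omega
  -- real abbreviations
  set Sr : ℝ := ∑ k ∈ univ.filter (fun k : Fin n => (k : ℕ) + 1 < l), v (σ k) with hSr
  have hSl : ∑ i : Fin l, v (σ (Fin.castLE hl2.le i)) = v (σ jl) + Sr := by
    rw [← sum_filter_lt hl2.le (fun k => v (σ k))]
    have : univ.filter (fun j : Fin n => (j : ℕ) < l)
        = insert jl (univ.filter (fun j : Fin n => (j : ℕ) + 1 < l)) := by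
      rw [← hsplit2]; apply Finset.filter_congr; intro k _; simp [not_le]
    rw [this, Finset.sum_insert hjlnot]
  have hSl1 : ∑ i : Fin (l - 1), v (σ (Fin.castLE hl1n.le i)) = Sr := by
    rw [← sum_filter_lt hl1n.le (fun k => v (σ k)), hSr]
    apply Finset.sum_congr _ (fun _ _ => rfl)
    apply Finset.filter_congr; intro k _
    constructor <;> (intro; omega)
  -- replace condexp values
  have hknownl : ∀ j : Fin n, (j : ℕ) < l →
      (μ[(fun τ => v (τ j)) | sampleFiltration n l hl2.le v]) σ = v (σ j) := by
    intro j hj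
    rw [condexp_known hl2.le v hj]
  have hknownl1 : ∀ j : Fin n, (j : ℕ) < l - 1 →
      (μ[(fun τ => v (τ j)) | sampleFiltration n (l - 1) hl1n.le v]) σ = v (σ j) := by
    intro j hj
    rw [condexp_known hl1n.le v hj]
  -- nonzero facts
  have hz1 : ((n : ℂ) - l) ≠ 0 := by
    have h0 : ((n - l : ℕ) : ℂ) ≠ 0 := Nat.cast_ne_zero.mpr (by omega)
    rwa [Nat.cast_sub hl2.le] at h0
  have hz2 : ((n : ℂ) - l + 1) ≠ 0 := by
    have h0 : ((n - l + 1 : ℕ) : ℂ) ≠ 0 := Nat.cast_ne_zero.mpr (by omega)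
    rwa [Nat.cast_add, Nat.cast_sub hl2.le, Nat.cast_one] at h0
  show ∑ j : Fin n, A j *
        (((μ[(fun τ => v (τ j)) | sampleFiltration n l hl2.le v]) σ : ℂ)
          - ((μ[(fun τ => v (τ j)) | sampleFiltration n (l - 1) hl1n.le v]) σ : ℂ))
      = (A jl - (∑ j ∈ univ.filter (fun j : Fin n => l ≤ (j : ℕ)), A j) / ((n : ℂ) - l))
        * ((v (σ jl) : ℂ)
          + (∑ k ∈ univ.filter (fun k : Fin n => (k : ℕ) + 1 < l), (v (σ k) : ℂ))
            / ((n : ℂ) - l + 1))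
  rw [← Finset.sum_filter_add_sum_filter_not univ (fun j : Fin n => l ≤ (j : ℕ))]
  have hpart1 : ∑ j ∈ univ.filter (fun j : Fin n => l ≤ (j : ℕ)), A j *
        (((μ[(fun τ => v (τ j)) | sampleFiltration n l hl2.le v]) σ : ℂ)
          - ((μ[(fun τ => v (τ j)) | sampleFiltration n (l - 1) hl1n.le v]) σ : ℂ))
      = (∑ j ∈ univ.filter (fun j : Fin n => l ≤ (j : ℕ)), A j) *
        (((-(((n : ℝ) - l)⁻¹) * (v (σ jl) + Sr) : ℝ) : ℂ)
          - ((-(((n : ℝ) - (l - 1 : ℕ))⁻¹) * Sr : ℝ) : ℂ)) := by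
    rw [Finset.sum_mul]
    refine Finset.sum_congr rfl fun j hj => ?_
    have hj' := (Finset.mem_filter.mp hj).2
    rw [(hσ j).1 hj', (hσ j).2 (by omega), hSl, hSl1]
  have hpart2 : ∑ j ∈ univ.filter (fun j : Fin n => ¬ l ≤ (j : ℕ)), A j *
        (((μ[(fun τ => v (τ j)) | sampleFiltration n l hl2.le v]) σ : ℂ)
          - ((μ[(fun τ => v (τ j)) | sampleFiltration n (l - 1) hl1n.le v]) σ : ℂ))
      = A jl * (((v (σ jl) : ℝ) : ℂ)
          - ((-(((n : ℝ) - (l - 1 : ℕ))⁻¹) * Sr : ℝ) : ℂ)) := by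
    rw [hsplit2, Finset.sum_insert hjlnot]
    have hz : ∑ j ∈ univ.filter (fun j : Fin n => (j : ℕ) + 1 < l), A j *
        (((μ[(fun τ => v (τ j)) | sampleFiltration n l hl2.le v]) σ : ℂ)
          - ((μ[(fun τ => v (τ j)) | sampleFiltration n (l - 1) hl1n.le v]) σ : ℂ))
        = 0 := by
      refine Finset.sum_eq_zero fun j hj => ?_
      have hj' := (Finset.mem_filter.mp hj).2
      rw [hknownl j (by omega), hknownl1 j (by omega)]
      ring
    rw [hz, add_zero, hknownl jl (Nat.sub_lt hl1 one_pos),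
      (hσ jl).2 (le_refl (l-1)), hSl1]
  rw [hpart1, hpart2]
  have hSrc : ∑ k ∈ univ.filter (fun k : Fin n => (k : ℕ) + 1 < l), ((v (σ k) : ℂ))
      = ((Sr : ℝ) : ℂ) := by
    rw [hSr]; push_cast; rfl
  rw [hSrc]
  exact alg n l hl1 hl2 (A jl) (∑ j ∈ univ.filter (fun j : Fin n => l ≤ (j : ℕ)), A j)
    (v (σ jl)) Sr
end
end
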